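/- arXiv:1007.2519 — 6 statements merged into one kernel-verified Lean document; each statement's English description precedes it below -/
import Mathlib

section
/- If (x,y) is an equilibrium of F, then ζ := √(x² + y²) is a positive real root of the polynomial ζ⁶ − 2α·ζ⁵ + (α² + 2)·ζ⁴ − 2α·ζ³ + (1 + Ω²)·ζ² − I² = 0. -/
/-- `g(x,y) = −1 + α√(x²+y²) − (x²+y²)`. -/
noncomputable def gRIC (α x y : ℝ) : ℝ :=
  -1 + α * Real.sqrt (x ^ 2 + y ^ 2) - (x ^ 2 + y ^ 2)

/-- The planar vector field `F(x,y) = (g·x − Ω·y + I, g·y + Ω·x)`. -/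
noncomputable def FRIC (α Ω I x y : ℝ) : ℝ × ℝ :=
  (gRIC α x y * x - Ω * y + I, gRIC α x y * y + Ω * x)

theorem equilibrium_root_of_sextic
    (α Ω I : ℝ) (hΩ : 0 < Ω) (hI : 0 < I) (x y : ℝ)
    (heq : FRIC α Ω I x y = (0, 0)) :
    0 < Real.sqrt (x ^ 2 + y ^ 2) ∧
    (Real.sqrt (x ^ 2 + y ^ 2)) ^ 6 - 2 * α * (Real.sqrt (x ^ 2 + y ^ 2)) ^ 5
      + (α ^ 2 + 2) * (Real.sqrt (x ^ 2 + y ^ 2)) ^ 4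
      - 2 * α * (Real.sqrt (x ^ 2 + y ^ 2)) ^ 3
      + (1 + Ω ^ 2) * (Real.sqrt (x ^ 2 + y ^ 2)) ^ 2 - I ^ 2 = 0 := by
  rw [FRIC, Prod.mk.injEq] at heq
  obtain ⟨h1, h2⟩ := heq
  set s := Real.sqrt (x ^ 2 + y ^ 2) with hs
  have hnn : (0:ℝ) ≤ x ^ 2 + y ^ 2 := by positivity
  have hs2 : s ^ 2 = x ^ 2 + y ^ 2 := Real.sq_sqrt hnn
  rw [gRIC, ← hs, ← hs2] at h1 h2
  have hpos : 0 < s := by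
    rcases lt_or_eq_of_le (Real.sqrt_nonneg (x ^ 2 + y ^ 2)) with h | h
    · exact h
    · exfalso
      rw [← hs] at h
      have hx : x = 0 ∧ y = 0 := by
        have h0 : x ^ 2 + y ^ 2 = 0 := by rw [← hs2, ← h]; ring
        constructor <;> nlinarith [sq_nonneg x, sq_nonneg y]
      rw [hx.1, hx.2] at h1
      have : s = 0 := h.symm
      nlinarith
  refine ⟨hpos, ?_⟩
  have e1 : (-1 + α * s - s ^ 2) * x - Ω * y = -I := by linarith
  have key : ((-1 + α * s - s ^ 2) * x - Ω * y) ^ 2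
      + ((-1 + α * s - s ^ 2) * y + Ω * x) ^ 2 = I ^ 2 := by
    rw [e1, h2]; ring
  linear_combination key + ((-1 + α * s - s ^ 2) ^ 2 + Ω ^ 2) * hs2
end

section
/- A point (x,y) ∈ ℝ² is an equilibrium of F if and only if there exists ζ > 0 such that ζ⁶ − 2α·ζ⁵ + (α² + 2)·ζ⁴ − 2α·ζ³ + (1 + Ω²)·ζ² − I² = 0, x = −(−1 + α·ζ − ζ²)·ζ²/I, and y = Ω·ζ²/I; in that case ζ = √(x² + y²). -/
lemma aux_sq (α Ω I : ℝ) (hI : 0 < I) (x y ζ : ℝ)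
    (hpoly : ζ ^ 6 - 2 * α * ζ ^ 5 + (α ^ 2 + 2) * ζ ^ 4 - 2 * α * ζ ^ 3
          + (1 + Ω ^ 2) * ζ ^ 2 - I ^ 2 = 0)
    (hx : x = -(-1 + α * ζ - ζ ^ 2) * ζ ^ 2 / I)
    (hy : y = Ω * ζ ^ 2 / I) : x ^ 2 + y ^ 2 = ζ ^ 2 := by
  have hI' : I ≠ 0 := hI.ne'
  rw [hx, hy]
  field_simp
  linear_combination ζ ^ 2 * hpoly

theorem equilibrium_characterization
    (α Ω I : ℝ) (hΩ : 0 < Ω) (hI : 0 < I) (x y : ℝ) :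
    (FRIC α Ω I x y = (0, 0) ↔
      ∃ ζ : ℝ, 0 < ζ ∧
        ζ ^ 6 - 2 * α * ζ ^ 5 + (α ^ 2 + 2) * ζ ^ 4 - 2 * α * ζ ^ 3
          + (1 + Ω ^ 2) * ζ ^ 2 - I ^ 2 = 0 ∧
        x = -(-1 + α * ζ - ζ ^ 2) * ζ ^ 2 / I ∧
        y = Ω * ζ ^ 2 / I) ∧
    (∀ ζ : ℝ, 0 < ζ →
      ζ ^ 6 - 2 * α * ζ ^ 5 + (α ^ 2 + 2) * ζ ^ 4 - 2 * α * ζ ^ 3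
        + (1 + Ω ^ 2) * ζ ^ 2 - I ^ 2 = 0 →
      x = -(-1 + α * ζ - ζ ^ 2) * ζ ^ 2 / I →
      y = Ω * ζ ^ 2 / I →
      ζ = Real.sqrt (x ^ 2 + y ^ 2)) := by
  have hI' : I ≠ 0 := hI.ne'
  constructor
  · constructor
    · intro hF
      have h1 : gRIC α x y * x - Ω * y + I = 0 := congrArg Prod.fst hF
      have h2 : gRIC α x y * y + Ω * x = 0 := congrArg Prod.snd hF
      set g := gRIC α x y with hgdef
      set ζ := Real.sqrt (x ^ 2 + y ^ 2) with hζdef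
      have hζ2 : ζ ^ 2 = x ^ 2 + y ^ 2 := Real.sq_sqrt (by positivity)
      have hg : g = -1 + α * ζ - ζ ^ 2 := by
        rw [hgdef, gRIC, ← hζdef, ← hζ2]
      have hζpos : 0 < ζ := by
        rcases lt_or_eq_of_le (Real.sqrt_nonneg (x ^ 2 + y ^ 2)) with h | h
        · exact h
        · exfalso
          have hζ0 : ζ = 0 := h.symm
          have hxy : x ^ 2 + y ^ 2 = 0 := by rw [← hζ2, hζ0]; ring
          have hx0 : x = 0 := by nlinarith [sq_nonneg x, sq_nonneg y]
          have hy0 : y = 0 := by nlinarith [sq_nonneg x, sq_nonneg y]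
          rw [hx0, hy0] at h1
          simp at h1
          linarith
      have e1 : g * x - Ω * y = -I := by linarith
      have e2 : g * y + Ω * x = 0 := h2
      have hsum : (g ^ 2 + Ω ^ 2) * ζ ^ 2 = I ^ 2 := by
        rw [hζ2]
        nlinarith [e1, e2, sq_nonneg (g * x - Ω * y), sq_nonneg (g * y + Ω * x)]
      have hxI : x * I * I = -g * ζ ^ 2 * I := by
        have hx' : (g ^ 2 + Ω ^ 2) * x = -I * g := by linear_combination g * e1 + Ω * e2
        linear_combination ζ ^ 2 * hx' - x * hsum
      have hxI' : x * I = -g * ζ ^ 2 := mul_right_cancel₀ hI' hxI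
      have hyI : y * I * I = Ω * ζ ^ 2 * I := by
        have hy' : (g ^ 2 + Ω ^ 2) * y = Ω * I := by linear_combination (-Ω) * e1 + g * e2
        linear_combination ζ ^ 2 * hy' - y * hsum
      have hyI' : y * I = Ω * ζ ^ 2 := mul_right_cancel₀ hI' hyI
      refine ⟨ζ, hζpos, ?_, ?_, ?_⟩
      · rw [hg] at hsum
        linear_combination hsum
      · rw [eq_div_iff hI']
        linear_combination hxI' - ζ ^ 2 * hg
      · rw [eq_div_iff hI']
        exact hyI'
    · rintro ⟨ζ, hζpos, hpoly, hx, hy⟩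
      have hs : x ^ 2 + y ^ 2 = ζ ^ 2 := aux_sq α Ω I hI x y ζ hpoly hx hy
      have hg : gRIC α x y = -1 + α * ζ - ζ ^ 2 := by
        rw [gRIC, hs, Real.sqrt_sq hζpos.le]
      rw [FRIC, hg, hx, hy, Prod.mk.injEq]
      constructor
      · field_simp
        linear_combination -hpoly
      · field_simp
        ring
  · intro ζ hζpos hpoly hx hy
    have hs : x ^ 2 + y ^ 2 = ζ ^ 2 := aux_sq α Ω I hI x y ζ hpoly hx hy
    rw [hs, Real.sqrt_sq hζpos.le]
end

section
/- Let (x,y) be an equilibrium of F and set ζ = √(x² + y²) (so ζ > 0). Then the determinant of the matrix J(x,y), namely (g + x²·h)·(g + y²·h) − (x·y·h − Ω)·(x·y·h + Ω), equals I²/ζ² + ζ·(−1 + α·ζ − ζ²)·(α − 2·ζ). -/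
/-- `h(x,y) = α/√(x²+y²) − 2`. -/
noncomputable def hRIC (α x y : ℝ) : ℝ :=
  α / Real.sqrt (x ^ 2 + y ^ 2) - 2

theorem det_of_jacobian_at_equilibrium
    (α Ω I : ℝ) (hΩ : 0 < Ω) (hI : 0 < I) (x y : ℝ)
    (heq : FRIC α Ω I x y = (0, 0))
    (ζ : ℝ) (hζ : ζ = Real.sqrt (x ^ 2 + y ^ 2)) :
    (gRIC α x y + x ^ 2 * hRIC α x y) * (gRIC α x y + y ^ 2 * hRIC α x y)
      - (x * y * hRIC α x y - Ω) * (x * y * hRIC α x y + Ω) =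
      I ^ 2 / ζ ^ 2 + ζ * (-1 + α * ζ - ζ ^ 2) * (α - 2 * ζ) := by
  rw [Prod.ext_iff] at heq
  obtain ⟨h1, h2⟩ := heq
  simp only [FRIC] at h1 h2
  have hr : ζ ^ 2 = x ^ 2 + y ^ 2 := by
    rw [hζ]; exact Real.sq_sqrt (by positivity)
  have hζ0 : ζ ≠ 0 := by
    intro h0
    have hx : x = 0 ∧ y = 0 := by
      constructor <;> nlinarith [hr, sq_nonneg x, sq_nonneg y]
    rw [hx.1, hx.2] at h1
    simp at h1
    exact hI.ne' h1
  have hg : gRIC α x y = -1 + α * ζ - ζ ^ 2 := by rw [gRIC, ← hζ, hr]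
  have hh : hRIC α x y = α / ζ - 2 := by rw [hRIC, ← hζ]
  rw [hg, hh]
  have key : I ^ 2 = ((-1 + α * ζ - ζ ^ 2) ^ 2 + Ω ^ 2) * (x ^ 2 + y ^ 2) := by
    rw [hg] at h1 h2
    linear_combination (I - (-1 + α * ζ - ζ ^ 2) * x + Ω * y) * h1 -
      ((-1 + α * ζ - ζ ^ 2) * y + Ω * x) * h2
  rw [← hr] at key
  have expand : ((-1 + α * ζ - ζ ^ 2) + x ^ 2 * (α / ζ - 2)) *
        ((-1 + α * ζ - ζ ^ 2) + y ^ 2 * (α / ζ - 2)) -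
      (x * y * (α / ζ - 2) - Ω) * (x * y * (α / ζ - 2) + Ω) =
      (-1 + α * ζ - ζ ^ 2) ^ 2 + Ω ^ 2 +
        (x ^ 2 + y ^ 2) * ((α / ζ - 2) * (-1 + α * ζ - ζ ^ 2)) := by ring
  rw [expand, ← hr, key]
  field_simp
end

section
/- Let α ≥ 4·√2/3 be real and set ζ₂ = (3α + √(9α² − 32))/8. Then (1/16)·(−16 + 3·α/ζ₂) < 0. -/
theorem supercritical_hopf_at_zeta_two
    (α : ℝ) (hα : α ≥ 4 * Real.sqrt 2 / 3) :
    (1 / 16 : ℝ) * (-16 + 3 * α / ((3 * α + Real.sqrt (9 * α ^ 2 - 32)) / 8)) < 0 := by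
  have h2 : (0:ℝ) < Real.sqrt 2 := Real.sqrt_pos.mpr (by norm_num)
  have hαpos : 0 < α := lt_of_lt_of_le (by positivity) hα
  have hs : 0 ≤ Real.sqrt (9 * α ^ 2 - 32) := Real.sqrt_nonneg _
  set s := Real.sqrt (9 * α ^ 2 - 32) with hsdef
  have hden : 0 < (3 * α + s) / 8 := by positivity
  have hle : 3 * α / ((3 * α + s) / 8) ≤ 8 := by
    rw [div_le_iff₀ hden]
    nlinarith
  nlinarith
end

section
/- Let α ≥ 4·√2/3 be real and set ζ₁ = (3α − √(9α² − 32))/8 (which is positive). Then (1/16)·(−16 + 3·α/ζ₁) > 0 if and only if 27·α² > 128. -/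
theorem subcritical_hopf_at_zeta_one
    (α : ℝ) (hα : α ≥ 4 * Real.sqrt 2 / 3) :
    0 < (3 * α - Real.sqrt (9 * α ^ 2 - 32)) / 8 ∧
    ((1 / 16 : ℝ) * (-16 + 3 * α / ((3 * α - Real.sqrt (9 * α ^ 2 - 32)) / 8)) > 0 ↔
      27 * α ^ 2 > 128) := by
  have h2 : Real.sqrt 2 ^ 2 = 2 := Real.sq_sqrt (by norm_num)
  have h2p : 0 < Real.sqrt 2 := Real.sqrt_pos.mpr (by norm_num)
  have hα0 : 0 < α := lt_of_lt_of_le (by positivity) hα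
  have hsq : 0 ≤ 9 * α ^ 2 - 32 := by nlinarith
  set s := Real.sqrt (9 * α ^ 2 - 32) with hsdef
  have hs0 : 0 ≤ s := Real.sqrt_nonneg _
  have hs2 : s ^ 2 = 9 * α ^ 2 - 32 := Real.sq_sqrt hsq
  have hslt : s < 3 * α := by nlinarith
  have hζ : 0 < (3 * α - s) / 8 := by linarith
  refine ⟨hζ, ?_⟩
  have hkey : (1 / 16 : ℝ) * (-16 + 3 * α / ((3 * α - s) / 8)) > 0 ↔ 2 * s > 3 * α := by
    rw [gt_iff_lt, ← sub_pos]
    have ht : (0:ℝ) < 3 * α - s := by linarith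
    constructor
    · intro h
      have h' : 3 * α / ((3 * α - s) / 8) > 16 := by nlinarith
      rw [gt_iff_lt, lt_div_iff₀ hζ] at h'
      linarith
    · intro h
      have h' : 16 < 3 * α / ((3 * α - s) / 8) := by
        rw [lt_div_iff₀ hζ]; linarith
      nlinarith
  rw [hkey]
  constructor
  · intro h; nlinarith
  · intro h; nlinarith
end

section
/- Consider the vector field F with parameters (α, Ω, I) = (3, 1, 2√2). Then the point (x,y) = (−√2, √2) satisfies F(x,y) = (0,0), and the matrix J(x,y) has trace 0 and determinant 0. Likewise, for parameters (α, Ω, I) = (3, 5/16, 5√2/64), the point (x,y) = (√2/8, √2/8) satisfies F(x,y) = (0,0), and the matrix J(x,y) has trace 0 and determinant 0. -/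
/-- The Jacobian matrix of `F` at `(x,y)`. -/
noncomputable def JRIC (α Ω x y : ℝ) : Matrix (Fin 2) (Fin 2) ℝ :=
  !![gRIC α x y + x ^ 2 * hRIC α x y, x * y * hRIC α x y - Ω;
     x * y * hRIC α x y + Ω, gRIC α x y + y ^ 2 * hRIC α x y]

theorem bogdanov_takens_points_alpha_three :
    (FRIC 3 1 (2 * Real.sqrt 2) (-Real.sqrt 2) (Real.sqrt 2) = (0, 0) ∧
      Matrix.trace (JRIC 3 1 (-Real.sqrt 2) (Real.sqrt 2)) = 0 ∧
      (JRIC 3 1 (-Real.sqrt 2) (Real.sqrt 2)).det = 0) ∧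
    (FRIC 3 (5 / 16) (5 * Real.sqrt 2 / 64) (Real.sqrt 2 / 8) (Real.sqrt 2 / 8) = (0, 0) ∧
      Matrix.trace (JRIC 3 (5 / 16) (Real.sqrt 2 / 8) (Real.sqrt 2 / 8)) = 0 ∧
      (JRIC 3 (5 / 16) (Real.sqrt 2 / 8) (Real.sqrt 2 / 8)).det = 0) := by
  have hs : Real.sqrt 2 ^ 2 = 2 := Real.sq_sqrt (by norm_num)
  have e1 : (-Real.sqrt 2) ^ 2 + Real.sqrt 2 ^ 2 = 4 := by nlinarith
  have h1 : Real.sqrt ((-Real.sqrt 2) ^ 2 + Real.sqrt 2 ^ 2) = 2 := by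
    rw [e1, show (4:ℝ) = 2 ^ 2 by norm_num, Real.sqrt_sq (by norm_num)]
  have e2 : (Real.sqrt 2 / 8) ^ 2 + (Real.sqrt 2 / 8) ^ 2 = 1 / 16 := by nlinarith
  have h2 : Real.sqrt ((Real.sqrt 2 / 8) ^ 2 + (Real.sqrt 2 / 8) ^ 2) = 1 / 4 := by
    rw [e2, show (1 / 16 : ℝ) = (1 / 4) ^ 2 by norm_num, Real.sqrt_sq (by norm_num)]
  have h4 : Real.sqrt 4 = 2 := by
    rw [show (4:ℝ) = 2 ^ 2 by norm_num, Real.sqrt_sq (by norm_num)]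
  have h16 : Real.sqrt (1 / 16 : ℝ) = 1 / 4 := by
    rw [show (1 / 16 : ℝ) = (1 / 4) ^ 2 by norm_num, Real.sqrt_sq (by norm_num)]
  simp only [FRIC, gRIC, hRIC, JRIC, e1, e2, h4, h16, Matrix.trace_fin_two_of,
    Matrix.det_fin_two_of, Prod.mk.injEq]
  refine ⟨⟨⟨by nlinarith [hs], by nlinarith [hs]⟩, by nlinarith [hs], by nlinarith [hs]⟩,
    ⟨⟨by nlinarith [hs], by nlinarith [hs]⟩, by nlinarith [hs], by nlinarith [hs]⟩⟩
end
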